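/- Let a < b be real numbers and let D = [a,b]. The ring B(D) of all bounded functions f : D → ℝ (with pointwise operations) is clean: every f ∈ B(D) can be written as u + e where u is a unit of B(D) and e ∈ B(D) is idempotent. -/

import Mathlib

/-- The ring of all bounded real-valued functions on a type `D`, a subring of the
product ring `D → ℝ` with pointwise operations. -/
def boundedFunctions (D : Type*) : Subring (D → ℝ) where
  carrier := {f | ∃ C, ∀ x, |f x| ≤ C}
  add_mem' := by
    rintro f g ⟨Cf, hCf⟩ ⟨Cg, hCg⟩
    exact ⟨Cf + Cg, fun x => (abs_add_le _ _).trans (add_le_add (hCf x) (hCg x))⟩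
  mul_mem' := by
    rintro f g ⟨Cf, hCf⟩ ⟨Cg, hCg⟩
    refine ⟨max Cf 0 * max Cg 0, fun x => ?_⟩
    rw [Pi.mul_apply, abs_mul]
    exact mul_le_mul ((hCf x).trans (le_max_left _ _)) ((hCg x).trans (le_max_left _ _))
      (abs_nonneg _) (le_max_right _ _)
  one_mem' := ⟨1, fun x => by simp⟩
  zero_mem' := ⟨0, fun x => by simp⟩
  neg_mem' := by
    rintro f ⟨Cf, hCf⟩
    exact ⟨Cf, fun x => by simpa using hCf x⟩

theorem boundedFunctions_clean (D : Type*) :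
    ∀ f : ↥(boundedFunctions D),
      ∃ u e : ↥(boundedFunctions D),
        IsUnit u ∧ IsIdempotentElem e ∧ f = u + e := by
  intro f
  obtain ⟨C, hC⟩ := f.2
  set ef : D → ℝ := fun x => if 1/2 ≤ |f.1 x| then 0 else 1 with hef
  have hemem : ef ∈ boundedFunctions D := by
    refine ⟨1, fun x => ?_⟩
    simp only [hef]
    split <;> norm_num
  set uf : D → ℝ := f.1 - ef with huf
  have humem : uf ∈ boundedFunctions D := Subring.sub_mem _ f.2 hemem
  have hkey : ∀ x, 1/2 ≤ |uf x| := by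
    intro x
    simp only [huf, hef, Pi.sub_apply]
    split
    case isTrue h => simpa using h
    case isFalse h =>
      push_neg at h
      have h2 : 1 - |f.1 x| ≤ |f.1 x - 1| := by
        have := abs_sub_abs_le_abs_sub (1 : ℝ) (f.1 x)
        rw [abs_sub_comm] at this
        simpa using this
      linarith
  have hne : ∀ x, uf x ≠ 0 := fun x hx => by
    have := hkey x; rw [hx] at this; simp at this; linarith
  set vf : D → ℝ := fun x => (uf x)⁻¹ with hvf
  have hvmem : vf ∈ boundedFunctions D := by
    refine ⟨2, fun x => ?_⟩
    simp only [hvf, abs_inv]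
    rw [inv_le_comm₀ (lt_of_lt_of_le (by norm_num) (hkey x)) (by norm_num)]
    calc (2 : ℝ)⁻¹ = 1/2 := by norm_num
    _ ≤ |uf x| := hkey x
  refine ⟨⟨uf, humem⟩, ⟨ef, hemem⟩, ?_, ?_, ?_⟩
  · refine IsUnit.of_mul_eq_one ⟨vf, hvmem⟩ ?_
    apply Subtype.ext
    funext x
    show uf x * vf x = 1
    simp only [hvf]
    field_simp
    exact div_self (hne x)
  · apply Subtype.ext
    funext x
    show ef x * ef x = ef x
    simp only [hef]
    split <;> norm_num
  · apply Subtype.ext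
    funext x
    show f.1 x = uf x + ef x
    simp only [huf, Pi.sub_apply]
    ring

/-- For `D = [a,b]` with `a < b`, the ring `B(D)` of all bounded functions
`D → ℝ` is clean: every element is the sum of a unit and an idempotent. -/
theorem boundedFunctions_Icc_clean (a b : ℝ) (hab : a < b) :
    ∀ f : ↥(boundedFunctions ↥(Set.Icc a b)),
      ∃ u e : ↥(boundedFunctions ↥(Set.Icc a b)),
        IsUnit u ∧ IsIdempotentElem e ∧ f = u + e :=
  boundedFunctions_clean _
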